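/- Let q = 2^n, let m ≡ 0 (mod 4), let f = Σ_{k=0}^{m} a_{m-k} x^k ∈ 𝔽_q[x] with a_0 ≠ 0, and let α ∈ 𝔽_q be nonzero. Let L_α f be the unique polynomial of degree at most d = (m-2)/2 with (L_α f)(x(x+α)) = f(x+α) + f(x). Then L_α f has degree exactly d if and only if a_1 ≠ 0. -/

import Mathlib

open Polynomial

theorem Lalpha_degree_iff (n m : ℕ) (hn : 0 < n) (hm : 0 < m) (hm4 : m % 4 = 0)
    (f : Polynomial (GaloisField 2 n)) (hf : f.natDegree = m)
    (α : GaloisField 2 n) (hα : α ≠ 0)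
    (L : Polynomial (GaloisField 2 n)) (hdeg : L.natDegree ≤ (m - 2) / 2)
    (hcomp : L.comp (X * (X + C α)) = f.comp (X + C α) + f) :
    L.natDegree = (m - 2) / 2 ↔ f.coeff (m - 1) ≠ 0 := by
  have hm4' : 4 ≤ m := by omega
  have h2 : (2 : GaloisField 2 n) = 0 := by
    have := CharP.cast_eq_zero (GaloisField 2 n) 2
    simpa using this
  -- the quadratic
  have hq : (X * (X + C α) : (GaloisField 2 n)[X]).natDegree = 2 := by
    have : (X * (X + C α) : (GaloisField 2 n)[X]) = X ^ 2 + C α * X := by ring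
    rw [this]
    have h1 : (C α * X : (GaloisField 2 n)[X]).natDegree < (X ^ 2 : (GaloisField 2 n)[X]).natDegree := by
      simpa using lt_of_le_of_lt (c := 2) (natDegree_C_mul_le α X) (by norm_num)
    rw [natDegree_add_eq_left_of_natDegree_lt h1, natDegree_X_pow]
  -- coefficient computation
  have hcast1 : ((m - 1 : ℕ) : GaloisField 2 n) = 1 := by
    obtain ⟨t, ht⟩ : ∃ t, m = 4 * t := ⟨m / 4, by omega⟩
    have : (m - 1 : ℕ) = 2 * (2 * t - 1) + 1 := by omega
    rw [this]
    push_cast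
    rw [h2]; ring
  have hcast2 : ((m.choose 2 : ℕ) : GaloisField 2 n) = 0 := by
    obtain ⟨t, ht⟩ : ∃ t, m = 4 * t := ⟨m / 4, by omega⟩
    have hch : m.choose 2 = 2 * (t * (m - 1)) := by
      rw [Nat.choose_two_right, ht]
      have h4 : 4 * t * (4 * t - 1) = 2 * (2 * (t * (4 * t - 1))) := by
        cases t with
        | zero => simp
        | succ s => ring_nf
      rw [h4, Nat.mul_div_cancel_left _ (by norm_num)]
    rw [hch]
    push_cast
    rw [h2]; ring
  have hg : (hasseDeriv (m - 2) f).natDegree < 3 := by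
    have := natDegree_hasseDeriv_le f (m - 2)
    omega
  have heval : (hasseDeriv (m - 2) f).eval α
      = f.coeff (m - 2) + α * f.coeff (m - 1) := by
    rw [eval_eq_sum_range' hg]
    rw [Finset.sum_range_succ, Finset.sum_range_succ, Finset.sum_range_one]
    rw [hasseDeriv_coeff, hasseDeriv_coeff, hasseDeriv_coeff]
    have e0 : (0 + (m - 2)).choose (m - 2) = 1 := by
      rw [Nat.zero_add, Nat.choose_self]
    have e1a : 1 + (m - 2) = m - 1 := by omega
    have e1 : (m - 1).choose (m - 2) = m - 1 := by
      have h : m - 2 = (m - 1) - 1 := by omega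
      rw [h, Nat.choose_symm (by omega), Nat.choose_one_right]
    have e2a : 2 + (m - 2) = m := by omega
    have e2 : m.choose (m - 2) = m.choose 2 := Nat.choose_symm (by omega)
    rw [e1a, e2a, e0, e1, e2, hcast1, hcast2, Nat.zero_add]
    ring
  have hcoeff : (f.comp (X + C α) + f).coeff (m - 2) = α * f.coeff (m - 1) := by
    rw [coeff_add, ← taylor_apply, taylor_coeff, heval]
    have : ∀ a b : GaloisField 2 n, a + b + a = b := by
      intro a b
      have : a + a = 0 := by
        have : a + a = 2 * a := by ring
        rw [this, h2]; ring
      linear_combination this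
    exact this _ _
  have hLcoeff : (L.comp (X * (X + C α))).coeff (m - 2) = α * f.coeff (m - 1) := by
    rw [hcomp]; exact hcoeff
  constructor
  · intro hL
    -- L ≠ 0 since its natDegree is (m-2)/2 ≥ 1
    have hLne : L ≠ 0 := by
      intro h0
      rw [h0] at hL
      simp at hL
      omega
    have hdc : (L.comp (X * (X + C α))).natDegree = m - 2 := by
      rw [natDegree_comp, hq, hL]
      omega
    have hlc : (L.comp (X * (X + C α))).leadingCoeff ≠ 0 := by
      rw [leadingCoeff_comp (by rw [hq]; norm_num)]
      apply mul_ne_zero (leadingCoeff_ne_zero.2 hLne)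
      apply pow_ne_zero
      have : (X * (X + C α) : (GaloisField 2 n)[X]).leadingCoeff ≠ 0 := by
        apply leadingCoeff_ne_zero.2
        intro h0
        have := hq
        rw [h0] at this
        simp at this
      exact this
    rw [Polynomial.leadingCoeff, hdc, hLcoeff] at hlc
    intro h0
    rw [h0, mul_zero] at hlc
    exact hlc rfl
  · intro ha
    have hne : (L.comp (X * (X + C α))).coeff (m - 2) ≠ 0 := by
      rw [hLcoeff]
      exact mul_ne_zero hα ha
    have hle : m - 2 ≤ (L.comp (X * (X + C α))).natDegree :=
      le_natDegree_of_ne_zero hne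
    rw [natDegree_comp, hq] at hle
    omega
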